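/- Let n ≥ 1 and let P be an invertible pairing involution on Fin 3 × Fin (2n). Assume that in the presented group Γ_P the images a₁, a₂, a₃ of the three generators indexed by Fin 3 are pairwise distinct, and the images b₁, …, b_{2n} of the generators indexed by Fin (2n) are pairwise distinct. Then Γ_P contains a nontrivial element of finite order, i.e., there exists g ∈ Γ_P with g ≠ 1 and IsOfFinOrder g. -/

import Mathlib

/-- The relator set of the group `Γ_P` associated to a pairing involution `P`:
for every cell `(i,j)` with `P (i,j) = (i',j')` we take the relator
`aᵢ bⱼ bⱼ'⁻¹ aᵢ'⁻¹`, imposing the relation `aᵢ bⱼ = aᵢ' bⱼ'`. -/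
def pairingRels {n m : ℕ} (P : Fin n × Fin m → Fin n × Fin m) :
    Set (FreeGroup (Fin n ⊕ Fin m)) :=
  {r | ∃ p : Fin n × Fin m,
    r = FreeGroup.of (Sum.inl p.1) * FreeGroup.of (Sum.inr p.2) *
        (FreeGroup.of (Sum.inr (P p).2))⁻¹ * (FreeGroup.of (Sum.inl (P p).1))⁻¹}

/-- Combinatorial core: if `P` is an invertible pairing involution with 3 rows, then for
every triple of distinct rows `i, i', i''` and every column `j`, exactly one of the two
cells `(i',j)`, `(i'',j)` has its partner in row `i`. -/
lemma pairing_xor {m : ℕ} (P : Fin 3 × Fin m → Fin 3 × Fin m)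
    (hP_invol : ∀ p, P (P p) = p)
    (hP_row : ∀ p, (P p).1 ≠ p.1)
    (hP_invertible : ∀ i : Fin 3, Function.Injective (fun j : Fin m => (P (i, j)).2))
    (i i' i'' : Fin 3) (h3 : i' ≠ i'')
    (hcov : ∀ a : Fin 3, a = i ∨ a = i' ∨ a = i'') (j : Fin m) :
    ((P (i', j)).1 = i ∧ (P (i'', j)).1 ≠ i) ∨
      ((P (i', j)).1 ≠ i ∧ (P (i'', j)).1 = i) := by
  classical
  set D : Fin 3 → Fin 3 → Finset (Fin m) :=
    fun a b => Finset.univ.filter (fun jj => (P (a, jj)).1 = b) with hD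
  have hmem : ∀ a b jj, jj ∈ D a b ↔ (P (a, jj)).1 = b := by
    intro a b jj; simp [hD]
  have invol2 : ∀ (a : Fin 3) (jj : Fin m), P ((P (a, jj)).1, (P (a, jj)).2) = (a, jj) := by
    intro a jj; rw [Prod.mk.eta]; exact hP_invol _
  have maps : ∀ a b, ∀ jj ∈ D a b, (P (a, jj)).2 ∈ D b a := by
    intro a b jj hj
    rw [hmem] at hj ⊢
    have h := invol2 a jj
    rw [hj] at h
    rw [h]
  have hinj : ∀ (a : Fin 3) (s : Finset (Fin m)),
      Set.InjOn (fun jj => (P (a, jj)).2) s := by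
    intro a s u _ v _ huv
    exact hP_invertible a huv
  have cardD : ∀ a b, (D a b).card = (D b a).card := by
    intro a b
    apply le_antisymm
    · exact Finset.card_le_card_of_injOn _ (maps a b) (hinj a _)
    · exact Finset.card_le_card_of_injOn _ (maps b a) (hinj b _)
  have hsplit : ∀ jj : Fin m, jj ∈ D i i' ∨ jj ∈ D i i'' := by
    intro jj
    rw [hmem, hmem]
    rcases hcov (P (i, jj)).1 with h | h | h
    · exact absurd h (hP_row (i, jj))
    · exact Or.inl h
    · exact Or.inr h
  have hdisj : Disjoint (D i i') (D i i'') := by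
    rw [Finset.disjoint_left]
    intro jj hj1 hj2
    rw [hmem] at hj1 hj2
    exact h3 (hj1 ▸ hj2)
  have huniv : D i i' ∪ D i i'' = Finset.univ := by
    apply Finset.eq_univ_of_forall
    intro jj
    rcases hsplit jj with h | h
    · exact Finset.mem_union_left _ h
    · exact Finset.mem_union_right _ h
  have hcard1 : (D i i').card + (D i i'').card = m := by
    rw [← Finset.card_union_of_disjoint hdisj, huniv, Finset.card_univ, Fintype.card_fin]
  have hcard3 : (D i' i).card + (D i'' i).card = m := by
    rw [cardD i' i, cardD i'' i]
    exact hcard1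
  have hcard2 : m ≤ (D i' i ∪ D i'' i).card := by
    have hmto : ∀ jj ∈ Finset.univ, (P (i, jj)).2 ∈ D i' i ∪ D i'' i := by
      intro jj _
      rcases hsplit jj with h | h
      · exact Finset.mem_union_left _ (maps i i' jj h)
      · exact Finset.mem_union_right _ (maps i i'' jj h)
    have := Finset.card_le_card_of_injOn _ hmto (hinj i Finset.univ)
    simpa using this
  have hUcard : (D i' i ∪ D i'' i).card = m := by
    refine le_antisymm ?_ hcard2
    calc (D i' i ∪ D i'' i).card ≤ Finset.univ.card := Finset.card_le_univ _
      _ = m := by simp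
  have hui : (D i' i ∪ D i'' i).card + (D i' i ∩ D i'' i).card
      = (D i' i).card + (D i'' i).card := Finset.card_union_add_card_inter _ _
  have hIcard : (D i' i ∩ D i'' i).card = 0 := by omega
  have hUuniv : D i' i ∪ D i'' i = Finset.univ := by
    apply Finset.eq_univ_of_card
    rw [hUcard, Fintype.card_fin]
  have hj1 : j ∈ D i' i ∪ D i'' i := by rw [hUuniv]; exact Finset.mem_univ j
  have hj2 : ¬(j ∈ D i' i ∧ j ∈ D i'' i) := by
    rintro ⟨hm1, hm2⟩
    have : j ∈ D i' i ∩ D i'' i := Finset.mem_inter.mpr ⟨hm1, hm2⟩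
    rw [Finset.card_eq_zero] at hIcard
    rw [hIcard] at this
    exact absurd this (Finset.notMem_empty j)
  rcases Finset.mem_union.mp hj1 with h | h
  · left
    exact ⟨(hmem _ _ _).mp h, fun hc => hj2 ⟨h, (hmem _ _ _).mpr hc⟩⟩
  · right
    exact ⟨fun hc => hj2 ⟨(hmem _ _ _).mpr hc, h⟩, (hmem _ _ _).mp h⟩

/-- If `P` is an invertible pairing involution on `Fin 3 × Fin (2n)` and the images of
the generators `a₁, a₂, a₃` (resp. `b₁, …, b_{2n}`) in `Γ_P` are pairwise distinct, then
`Γ_P` contains a nontrivial element of finite order. -/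
theorem invertible_pairing_3x2n_has_torsion (n : ℕ) (hn : 1 ≤ n)
    (P : Fin 3 × Fin (2 * n) → Fin 3 × Fin (2 * n))
    (hP_invol : ∀ p, P (P p) = p)
    (hP_nofix : ∀ p, P p ≠ p)
    (hP_row : ∀ p, (P p).1 ≠ p.1)
    (hP_col : ∀ p, (P p).2 ≠ p.2)
    (hP_invertible : ∀ i : Fin 3, Function.Injective (fun j : Fin (2 * n) => (P (i, j)).2))
    (ha : Function.Injective
      (fun i : Fin 3 => (PresentedGroup.of (rels := pairingRels P) (Sum.inl i))))
    (hb : Function.Injective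
      (fun j : Fin (2 * n) => (PresentedGroup.of (rels := pairingRels P) (Sum.inr j)))) :
    ∃ g : PresentedGroup (pairingRels P), g ≠ 1 ∧ IsOfFinOrder g := by
  classical
  -- notation
  set Af : Fin 3 → PresentedGroup (pairingRels P) :=
    fun i => PresentedGroup.of (rels := pairingRels P) (Sum.inl i) with hAf
  set Bf : Fin (2 * n) → PresentedGroup (pairingRels P) :=
    fun j => PresentedGroup.of (rels := pairingRels P) (Sum.inr j) with hBf
  -- the defining relations
  have key : ∀ (i : Fin 3) (j : Fin (2 * n)),
      Bf ((P (i, j)).2) = ((Af ((P (i, j)).1))⁻¹ * Af i) * Bf j := by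
    intro i j
    have hr : (FreeGroup.of (Sum.inl i) * FreeGroup.of (Sum.inr j) *
        (FreeGroup.of (Sum.inr (P (i, j)).2))⁻¹ *
        (FreeGroup.of (Sum.inl (P (i, j)).1))⁻¹) ∈ pairingRels P := ⟨(i, j), rfl⟩
    have h1 : (QuotientGroup.mk (FreeGroup.of (Sum.inl i) * FreeGroup.of (Sum.inr j) *
        (FreeGroup.of (Sum.inr (P (i, j)).2))⁻¹ *
        (FreeGroup.of (Sum.inl (P (i, j)).1))⁻¹) :
        PresentedGroup (pairingRels P)) = 1 :=
      (QuotientGroup.eq_one_iff _).mpr (Subgroup.subset_normalClosure hr)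
    have h2 : Af i * Bf j * (Bf ((P (i, j)).2))⁻¹ * (Af ((P (i, j)).1))⁻¹ = 1 := by
      rw [hAf, hBf]
      exact h1
    have h3 : Af i * Bf j = Af ((P (i, j)).1) * Bf ((P (i, j)).2) := by
      have h4 := mul_inv_eq_one.mp h2
      have h5 := mul_inv_eq_iff_eq_mul.mp h4
      exact h5
    rw [mul_assoc, h3, inv_mul_cancel_left]
  -- involution on components
  have invol2 : ∀ (i : Fin 3) (j : Fin (2 * n)),
      P ((P (i, j)).1, (P (i, j)).2) = (i, j) := by
    intro i j; rw [Prod.mk.eta]; exact hP_invol _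
  have transfer : ∀ (i k : Fin 3) (j : Fin (2 * n)), (P (i, j)).1 = k →
      (P (k, (P (i, j)).2)).1 = i := by
    intro i k j hk
    have h := invol2 i j
    rw [hk] at h
    rw [h]
  -- the XOR facts from invertibility
  have xorA := fun j => pairing_xor P hP_invol hP_row hP_invertible 0 1 2
    (by decide) (by decide) j
  have xorC := fun j => pairing_xor P hP_invol hP_row hP_invertible 2 0 1
    (by decide) (by decide) j
  -- row constraints
  have r0 : ∀ j, (P ((0 : Fin 3), j)).1 = 1 ∨ (P ((0 : Fin 3), j)).1 = 2 := by
    intro j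
    have h := hP_row ((0 : Fin 3), j)
    have : ∀ a : Fin 3, a ≠ 0 → a = 1 ∨ a = 2 := by decide
    exact this _ h
  have r1 : ∀ j, (P ((1 : Fin 3), j)).1 = 0 ∨ (P ((1 : Fin 3), j)).1 = 2 := by
    intro j
    have h := hP_row ((1 : Fin 3), j)
    have : ∀ a : Fin 3, a ≠ 1 → a = 0 ∨ a = 2 := by decide
    exact this _ h
  have r2 : ∀ j, (P ((2 : Fin 3), j)).1 = 0 ∨ (P ((2 : Fin 3), j)).1 = 1 := by
    intro j
    have h := hP_row ((2 : Fin 3), j)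
    have : ∀ a : Fin 3, a ≠ 2 → a = 0 ∨ a = 1 := by decide
    exact this _ h
  -- column types
  set TA : Fin (2 * n) → Prop := fun j =>
    (P ((0 : Fin 3), j)).1 = 1 ∧ (P ((1 : Fin 3), j)).1 = 2 ∧ (P ((2 : Fin 3), j)).1 = 0
    with hTA
  set TB : Fin (2 * n) → Prop := fun j =>
    (P ((0 : Fin 3), j)).1 = 2 ∧ (P ((1 : Fin 3), j)).1 = 0 ∧ (P ((2 : Fin 3), j)).1 = 1
    with hTB
  have dich : ∀ j, TA j ∨ TB j := by
    intro j
    rcases xorA j with ⟨h10, h20⟩ | ⟨h10, h20⟩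
    · -- (P (1,j)).1 = 0, (P (2,j)).1 ≠ 0
      have h21 : (P ((2 : Fin 3), j)).1 = 1 := by
        rcases r2 j with h | h
        · exact absurd h h20
        · exact h
      have h02 : (P ((0 : Fin 3), j)).1 = 2 := by
        rcases xorC j with ⟨h, _⟩ | ⟨_, h⟩
        · exact h
        · rw [h10] at h; exact absurd h (by decide)
      exact Or.inr ⟨h02, h10, h21⟩
    · -- (P (1,j)).1 ≠ 0, (P (2,j)).1 = 0
      have h12 : (P ((1 : Fin 3), j)).1 = 2 := by
        rcases r1 j with h | h
        · exact absurd h h10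
        · exact h
      have h01 : (P ((0 : Fin 3), j)).1 = 1 := by
        rcases xorC j with ⟨h, hne⟩ | ⟨hne, _⟩
        · exact absurd h12 hne
        · rcases r0 j with h | h
          · exact h
          · exact absurd h hne
      exact Or.inl ⟨h01, h12, h20⟩
  -- alternation of types under the row permutations
  have altA0 : ∀ j, TA j → TB ((P ((0 : Fin 3), j)).2) := by
    intro j hj
    have h := transfer 0 1 j hj.1
    rcases dich ((P ((0 : Fin 3), j)).2) with hA | hB
    · rw [hA.2.1] at h; exact absurd h (by decide)
    · exact hB
  have altB0 : ∀ j, TB j → TA ((P ((0 : Fin 3), j)).2) := by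
    intro j hj
    have h := transfer 0 2 j hj.1
    rcases dich ((P ((0 : Fin 3), j)).2) with hA | hB
    · exact hA
    · rw [hB.2.2] at h; exact absurd h (by decide)
  have altA1 : ∀ j, TA j → TB ((P ((1 : Fin 3), j)).2) := by
    intro j hj
    have h := transfer 1 2 j hj.2.1
    rcases dich ((P ((1 : Fin 3), j)).2) with hA | hB
    · rw [hA.2.2] at h; exact absurd h (by decide)
    · exact hB
  have altB1 : ∀ j, TB j → TA ((P ((1 : Fin 3), j)).2) := by
    intro j hj
    have h := transfer 1 0 j hj.2.1
    rcases dich ((P ((1 : Fin 3), j)).2) with hA | hB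
    · exact hA
    · rw [hB.1] at h; exact absurd h (by decide)
  -- the row permutations
  have hbij : ∀ i : Fin 3, Function.Bijective (fun j : Fin (2 * n) => (P (i, j)).2) :=
    fun i => Finite.injective_iff_bijective.mp (hP_invertible i)
  set e : Fin 3 → Equiv.Perm (Fin (2 * n)) :=
    fun i => Equiv.ofBijective _ (hbij i) with he
  have heapp : ∀ (i : Fin 3) (u : Fin (2 * n)), e i u = (P (i, u)).2 := fun i u => rfl
  -- generic walk lemma
  have walk : ∀ (i : Fin 3) (w1 w2 : PresentedGroup (pairingRels P))
      (S T : Fin (2 * n) → Prop),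
      (∀ j, S j → T ((P (i, j)).2) ∧ Bf ((P (i, j)).2) = w1 * Bf j) →
      (∀ j, T j → S ((P (i, j)).2) ∧ Bf ((P (i, j)).2) = w2 * Bf j) →
      ∀ (t : ℕ) (j), S j →
        S ((e i ^ (2 * t)) j) ∧ Bf ((e i ^ (2 * t)) j) = (w2 * w1) ^ t * Bf j := by
    intro i w1 w2 S T hS hT t
    induction t with
    | zero => intro j hj; simpa using hj
    | succ t ih =>
      intro j hj
      have hstep1 := hS j hj
      have hstep2 := hT ((P (i, j)).2) hstep1.1
      obtain ⟨hS2, hB2⟩ := ih ((P ((i : Fin 3), (P (i, j)).2)).2) hstep2.1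
      have happ : (e i ^ (2 * (t + 1))) j
          = (e i ^ (2 * t)) ((P ((i : Fin 3), (P (i, j)).2)).2) := by
        have h2t : 2 * (t + 1) = 2 * t + 1 + 1 := by ring
        rw [h2t, pow_succ, pow_succ, Equiv.Perm.mul_apply, Equiv.Perm.mul_apply,
          heapp, heapp]
      constructor
      · rw [happ]; exact hS2
      · rw [happ, hB2, hstep2.2, hstep1.2, pow_succ]
        group
  -- choose a starting column
  have hpos : 0 < 2 * n := by omega
  set j0 : Fin (2 * n) := ⟨0, hpos⟩ with hj0
  -- step lemmas for rows 0 and 1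
  set X : PresentedGroup (pairingRels P) := (Af 1)⁻¹ * Af 0 with hX
  set Z : PresentedGroup (pairingRels P) := (Af 2)⁻¹ * Af 0 with hZ
  set Y2 : PresentedGroup (pairingRels P) := (Af 2)⁻¹ * Af 1 with hY2
  set Y0 : PresentedGroup (pairingRels P) := (Af 0)⁻¹ * Af 1 with hY0
  have stepA0 : ∀ j, TA j → TB ((P ((0 : Fin 3), j)).2) ∧
      Bf ((P ((0 : Fin 3), j)).2) = X * Bf j := by
    intro j hj
    refine ⟨altA0 j hj, ?_⟩
    have h := key 0 j
    rw [hj.1] at h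
    exact h
  have stepB0 : ∀ j, TB j → TA ((P ((0 : Fin 3), j)).2) ∧
      Bf ((P ((0 : Fin 3), j)).2) = Z * Bf j := by
    intro j hj
    refine ⟨altB0 j hj, ?_⟩
    have h := key 0 j
    rw [hj.1] at h
    exact h
  have stepA1 : ∀ j, TA j → TB ((P ((1 : Fin 3), j)).2) ∧
      Bf ((P ((1 : Fin 3), j)).2) = Y2 * Bf j := by
    intro j hj
    refine ⟨altA1 j hj, ?_⟩
    have h := key 1 j
    rw [hj.2.1] at h
    exact h
  have stepB1 : ∀ j, TB j → TA ((P ((1 : Fin 3), j)).2) ∧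
      Bf ((P ((1 : Fin 3), j)).2) = Y0 * Bf j := by
    intro j hj
    refine ⟨altB1 j hj, ?_⟩
    have h := key 1 j
    rw [hj.2.1] at h
    exact h
  -- order of permutations
  have hperm_pow : ∀ i : Fin 3, (e i) ^ (2 * orderOf (e i)) = 1 := by
    intro i
    rw [Nat.mul_comm 2 (orderOf (e i)), pow_mul, pow_orderOf_eq_one, one_pow]
  have hNpos : ∀ i : Fin 3, 0 < orderOf (e i) := fun i => orderOf_pos (e i)
  -- extract torsion relation from a walk
  have extract : ∀ (i : Fin 3) (w : PresentedGroup (pairingRels P))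
      (S : Fin (2 * n) → Prop), S j0 →
      (∀ (t : ℕ) (j), S j →
        S ((e i ^ (2 * t)) j) ∧ Bf ((e i ^ (2 * t)) j) = w ^ t * Bf j) →
      w ^ (orderOf (e i)) = 1 := by
    intro i w S hS0 hwalk
    obtain ⟨-, hB⟩ := hwalk (orderOf (e i)) j0 hS0
    simp only [hperm_pow i, Equiv.Perm.one_apply] at hB
    have : w ^ (orderOf (e i)) * Bf j0 = 1 * Bf j0 := by rw [one_mul]; exact hB.symm
    exact mul_right_cancel this
  -- nontriviality of a₀⁻¹ a₁
  have hg_ne : (Af 0)⁻¹ * Af 1 ≠ 1 := by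
    intro h
    have h01 : Af 0 = Af 1 := by
      have := inv_mul_eq_one.mp h
      exact this
    have : (0 : Fin 3) = 1 := ha (by simpa [hAf] using h01)
    exact absurd this (by decide)
  -- final case analysis
  rcases dich j0 with hA | hB
  · -- TA j0
    have hU : (Z * X) ^ (orderOf (e 0)) = 1 :=
      extract 0 (Z * X) TA hA (walk 0 X Z TA TB stepA0 stepB0)
    have hV : (Y0 * Y2) ^ (orderOf (e 1)) = 1 :=
      extract 1 (Y0 * Y2) TA hA (walk 1 Y2 Y0 TA TB stepA1 stepB1)
    by_cases hZX : Z * X = 1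
    · by_cases hYY : Y0 * Y2 = 1
      · -- both trivial: (a₀⁻¹a₁)³ = 1
        have hA2 : Af 2 = Af 0 * ((Af 1)⁻¹ * Af 0) := by
          have h := hZX
          rw [hZ, hX, mul_assoc] at h
          exact inv_mul_eq_one.mp h
        have hg3 : ((Af 0)⁻¹ * Af 1) ^ 3 = 1 := by
          have h' := hYY
          rw [hY0, hY2, hA2] at h'
          rw [pow_succ, pow_succ, pow_one]
          simp only [mul_inv_rev, inv_inv, mul_assoc] at h' ⊢
          exact h'
        exact ⟨(Af 0)⁻¹ * Af 1, hg_ne,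
          isOfFinOrder_iff_pow_eq_one.mpr ⟨3, by norm_num, hg3⟩⟩
      · exact ⟨Y0 * Y2, hYY,
          isOfFinOrder_iff_pow_eq_one.mpr ⟨orderOf (e 1), hNpos 1, hV⟩⟩
    · exact ⟨Z * X, hZX,
        isOfFinOrder_iff_pow_eq_one.mpr ⟨orderOf (e 0), hNpos 0, hU⟩⟩
  · -- TB j0
    have hU : (X * Z) ^ (orderOf (e 0)) = 1 :=
      extract 0 (X * Z) TB hB (walk 0 Z X TB TA stepB0 stepA0)
    have hV : (Y2 * Y0) ^ (orderOf (e 1)) = 1 :=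
      extract 1 (Y2 * Y0) TB hB (walk 1 Y0 Y2 TB TA stepB1 stepA1)
    by_cases hXZ : X * Z = 1
    · by_cases hYY : Y2 * Y0 = 1
      · have hA1 : Af 1 = Af 0 * ((Af 2)⁻¹ * Af 0) := by
          have h := hXZ
          rw [hX, hZ, mul_assoc] at h
          exact inv_mul_eq_one.mp h
        have hA2 : Af 2 = Af 0 * ((Af 1)⁻¹ * Af 0) := by
          rw [hA1]; group
        have hg3 : ((Af 0)⁻¹ * Af 1) ^ 3 = 1 := by
          have h' := hYY
          rw [hY2, hY0, hA2] at h'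
          rw [pow_succ, pow_succ, pow_one]
          simp only [mul_inv_rev, inv_inv, mul_assoc] at h' ⊢
          exact h'
        exact ⟨(Af 0)⁻¹ * Af 1, hg_ne,
          isOfFinOrder_iff_pow_eq_one.mpr ⟨3, by norm_num, hg3⟩⟩
      · exact ⟨Y2 * Y0, hYY,
          isOfFinOrder_iff_pow_eq_one.mpr ⟨orderOf (e 1), hNpos 1, hV⟩⟩
    · exact ⟨X * Z, hXZ,
        isOfFinOrder_iff_pow_eq_one.mpr ⟨orderOf (e 0), hNpos 0, hU⟩⟩
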